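/- Let n ≥ 2 and let {A(t)}_{t≥0} be a sequence of column-stochastic n×n matrices, each of out-degree form, that is strongly aperiodic and has the directed infinite flow property. If the associated sequence {ℓ_q} satisfies Σ_{q=1}^∞ 1/n^{ℓ_q} = ∞, then for every s ≥ 0 there exist vectors φ(t) ∈ ℝⁿ (for t ≥ s) such that for all i, j ∈ [n], lim_{t→∞} |[A(t:s)]_{ij} − φ_i(t)| = 0. -/

import Mathlib

open Finset MeasureTheory

/-- `A_{S S̄} = ∑_{i ∈ S, j ∉ S} A i j`. -/
def flowSum {n : ℕ} (A : Matrix (Fin n) (Fin n) ℝ) (S : Finset (Fin n)) : ℝ :=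
  ∑ i ∈ S, ∑ j ∈ Sᶜ, A i j

/-- `S` is a nontrivial subset of `[n]`. -/
def NontrivialSubset {n : ℕ} (S : Finset (Fin n)) : Prop :=
  S.Nonempty ∧ S ≠ Finset.univ

/-- Directed infinite flow property: for every nontrivial `S`, `∑_t A_{S S̄}(t) = ∞`. -/
def DirectedInfiniteFlow {n : ℕ} (A : ℕ → Matrix (Fin n) (Fin n) ℝ) : Prop :=
  ∀ S : Finset (Fin n), NontrivialSubset S →
    Filter.Tendsto (fun T => ∑ t ∈ Finset.range T, flowSum (A t) S)
      Filter.atTop Filter.atTop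

/-- The backward product `A(t:s) = A(t) A(t-1) ⋯ A(s)`. -/
def matProd {n : ℕ} (A : ℕ → Matrix (Fin n) (Fin n) ℝ) (t s : ℕ) :
    Matrix (Fin n) (Fin n) ℝ :=
  (((List.range (t + 1 - s)).map fun k => A (t - k))).prod

/-- Row-stochastic nonnegative matrix. -/
def RowStochastic {n : ℕ} (A : Matrix (Fin n) (Fin n) ℝ) : Prop :=
  (∀ i j, 0 ≤ A i j) ∧ ∀ i, ∑ j, A i j = 1

/-- Column-stochastic nonnegative matrix. -/
def ColStochastic {n : ℕ} (A : Matrix (Fin n) (Fin n) ℝ) : Prop :=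
  (∀ i j, 0 ≤ A i j) ∧ ∀ j, ∑ i, A i j = 1

/-- `W` is the degree-normalized adjacency matrix of a digraph with all self-loops:
`W i j = 1 / (out-degree of j)` if there is an edge from `j` to `i`, else `0`. -/
def OutDegreeForm {n : ℕ} (W : Matrix (Fin n) (Fin n) ℝ) : Prop :=
  ∃ N : Fin n → Finset (Fin n), (∀ j, j ∈ N j) ∧
    ∀ i j, W i j = if i ∈ N j then (1 : ℝ) / (N j).card else 0

/-- Strong aperiodicity of a sequence of matrices. -/
def StronglyAperiodic {n : ℕ} (A : ℕ → Matrix (Fin n) (Fin n) ℝ) : Prop :=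
  ∃ γ : ℝ, 0 < γ ∧ ∀ t i, γ ≤ A t i i

/-- The times `k_q`: `k_0 = 0` and `k_q` is the least `t' > k_{q-1}` with
nonzero flow `∑_{t=k_{q-1}}^{t'-1} A_{S S̄}(t) > 0` across every nontrivial cut. -/
noncomputable def kSeq {n : ℕ} (A : ℕ → Matrix (Fin n) (Fin n) ℝ) : ℕ → ℕ
  | 0 => 0
  | q + 1 => sInf {t' : ℕ | kSeq A q < t' ∧ ∀ S : Finset (Fin n), NontrivialSubset S →
      0 < ∑ t ∈ Finset.Ico (kSeq A q) t', flowSum (A t) S}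

/-- `ℓ_q = k_{qn} - k_{(q-1)n}`. -/
noncomputable def ellSeq {n : ℕ} (A : ℕ → Matrix (Fin n) (Fin n) ℝ) (q : ℕ) : ℕ :=
  kSeq A (q * n) - kSeq A ((q - 1) * n)

/-- The index set `Q_{t,s} = {q ≥ 1 : s ≤ k_{(q-1)n}, k_{qn} ≤ t}` (as a `Finset`). -/
noncomputable def QSet {n : ℕ} (A : ℕ → Matrix (Fin n) (Fin n) ℝ) (t s : ℕ) :
    Finset ℕ :=
  (Finset.Icc 1 t).filter fun q => s ≤ kSeq A ((q - 1) * n) ∧ kSeq A (q * n) ≤ t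

/-- `Λ_{t,s} = ∏_{q ∈ Q_{t,s}} (1 - 1/n^{ℓ_q})`. -/
noncomputable def Lam {n : ℕ} (A : ℕ → Matrix (Fin n) (Fin n) ℝ) (t s : ℕ) : ℝ :=
  ∏ q ∈ QSet A t s, (1 - 1 / (n : ℝ) ^ (ellSeq A q))

/-- Push-sum iterates: `u(0) = u0`, `u(t+1) = W(t) u(t)`. -/
def pushIter {n : ℕ} (W : ℕ → Matrix (Fin n) (Fin n) ℝ) (u0 : Fin n → ℝ) : ℕ → Fin n → ℝ
  | 0 => u0
  | t + 1 => (W t).mulVec (pushIter W u0 t)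

/-- A nonnegative matrix is irreducible if the digraph with an edge from `j` to `i`
whenever `A i j > 0` is strongly connected. -/
def IrreducibleMat {n : ℕ} (A : Matrix (Fin n) (Fin n) ℝ) : Prop :=
  ∀ i j : Fin n, Relation.ReflTransGen (fun a b => 0 < A b a) i j

section Lemmas

variable {n : ℕ} (A : ℕ → Matrix (Fin n) (Fin n) ℝ)

lemma matProd_eq_one {t s : ℕ} (h : t + 1 ≤ s) : matProd A t s = 1 := by
  unfold matProd
  rw [Nat.sub_eq_zero_of_le h]
  simp

lemma matProd_succ {t s : ℕ} (h : s ≤ t + 1) :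
    matProd A (t + 1) s = A (t + 1) * matProd A t s := by
  unfold matProd
  have h1 : t + 1 + 1 - s = (t + 1 - s) + 1 := by omega
  have h2 : (List.range ((t + 1 - s) + 1)).map (fun k => A (t + 1 - k))
      = A (t + 1) :: (List.range (t + 1 - s)).map (fun k => A (t - k)) := by
    rw [List.range_succ_eq_map, List.map_cons, List.map_map]
    simp only [Nat.sub_zero]
    have h3 : ((fun k => A (t + 1 - k)) ∘ Nat.succ) = fun k => A (t - k) := by
      funext k
      simp [Function.comp, Nat.succ_sub_succ]
    rw [h3]
  rw [h1, h2, List.prod_cons]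

lemma matProd_split {s a : ℕ} (hsa : s < a) :
    ∀ b, a - 1 ≤ b → matProd A b s = matProd A b a * matProd A (a - 1) s := by
  intro b hb
  induction b, hb using Nat.le_induction with
  | base =>
      rw [matProd_eq_one A (by omega : (a-1) + 1 ≤ a), one_mul]
  | succ b hb ih =>
      rw [matProd_succ A (by omega), matProd_succ A (by omega), ih, Matrix.mul_assoc]

lemma colStochastic_one : ColStochastic (1 : Matrix (Fin n) (Fin n) ℝ) := by
  constructor
  · intro i j
    by_cases h : i = j <;> simp [Matrix.one_apply, h]
  · intro j
    simp [Matrix.one_apply]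

lemma colStochastic_mul {M N : Matrix (Fin n) (Fin n) ℝ} (hM : ColStochastic M)
    (hN : ColStochastic N) : ColStochastic (M * N) := by
  constructor
  · intro i j
    rw [Matrix.mul_apply]
    exact Finset.sum_nonneg fun k _ => mul_nonneg (hM.1 i k) (hN.1 k j)
  · intro j
    simp only [Matrix.mul_apply]
    rw [Finset.sum_comm]
    simp only [← Finset.sum_mul, hM.2, one_mul, hN.2]

lemma colStochastic_matProd (hCS : ∀ t, ColStochastic (A t)) (t s : ℕ) :
    ColStochastic (matProd A t s) := by
  unfold matProd
  generalize t + 1 - s = m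
  induction m with
  | zero => simpa using colStochastic_one
  | succ m ih =>
      rw [List.range_succ, List.map_append, List.prod_append]
      exact colStochastic_mul ih (by simpa using hCS _)

end Lemmas
section Lemmas2

variable {n : ℕ} {A : ℕ → Matrix (Fin n) (Fin n) ℝ}

lemma od_diag_pos (hOD : ∀ t, OutDegreeForm (A t)) (t : ℕ) (i : Fin n) :
    0 < A t i i := by
  obtain ⟨N, hself, hform⟩ := hOD t
  rw [hform, if_pos (hself i)]
  have : 0 < (N i).card := Finset.card_pos.mpr ⟨i, hself i⟩
  positivity

lemma od_entry_lb (hOD : ∀ t, OutDegreeForm (A t)) (t : ℕ) {i j : Fin n}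
    (h : 0 < A t i j) : ((n : ℝ))⁻¹ ≤ A t i j := by
  obtain ⟨N, hself, hform⟩ := hOD t
  rw [hform] at h ⊢
  by_cases hij : i ∈ N j
  · rw [if_pos hij]
    have h1 : 0 < (N j).card := Finset.card_pos.mpr ⟨j, hself j⟩
    have h2 : (N j).card ≤ n := by
      simpa using Finset.card_le_univ (N j)
    rw [one_div]
    apply inv_anti₀
    · exact_mod_cast h1
    · exact_mod_cast h2
  · rw [if_neg hij] at h; exact absurd h (lt_irrefl 0)

lemma matProd_entry_lb (hCS : ∀ t, ColStochastic (A t)) (hOD : ∀ t, OutDegreeForm (A t))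
    (s : ℕ) : ∀ t, ∀ i j : Fin n, 0 < matProd A t s i j →
      ((n : ℝ))⁻¹ ^ (t + 1 - s) ≤ matProd A t s i j := by
  intro t
  induction t with
  | zero =>
      intro i j h
      by_cases hs : 1 ≤ s
      · rw [matProd_eq_one A (by omega)] at h ⊢
        rw [Nat.sub_eq_zero_of_le (by omega), pow_zero]
        rw [Matrix.one_apply] at h ⊢
        by_cases hij : i = j
        · rw [if_pos hij]
        · rw [if_neg hij] at h; exact absurd h (lt_irrefl 0)
      · have hs0 : s = 0 := by omega
        subst hs0
        have h01 : matProd A 0 0 = A 0 := by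
          unfold matProd; simp
        rw [h01] at h ⊢
        rw [show 0 + 1 - 0 = 1 from rfl, pow_one]
        exact od_entry_lb hOD 0 h
  | succ t ih =>
      intro i j h
      by_cases hs : s ≤ t + 1
      · rw [matProd_succ A hs] at h ⊢
        rw [Matrix.mul_apply] at h ⊢
        have hterm : ∀ k ∈ Finset.univ, (0:ℝ) ≤ A (t+1) i k * matProd A t s k j :=
          fun k _ => mul_nonneg ((hCS (t+1)).1 i k) ((colStochastic_matProd A hCS t s).1 k j)
        obtain ⟨k, hk, hkpos⟩ : ∃ k ∈ Finset.univ, 0 < A (t+1) i k * matProd A t s k j := by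
          by_contra hc
          push_neg at hc
          have : ∑ k, A (t+1) i k * matProd A t s k j ≤ 0 :=
            Finset.sum_nonpos fun k hk => hc k hk
          linarith
        have hA : 0 < A (t+1) i k := by
          rcases mul_pos_iff.mp hkpos with ⟨h1, _⟩ | ⟨h1, h2⟩
          · exact h1
          · exact absurd h2 (not_lt.mpr ((colStochastic_matProd A hCS t s).1 k j))
        have hM : 0 < matProd A t s k j := by
          rcases mul_pos_iff.mp hkpos with ⟨_, h2⟩ | ⟨h1, _⟩
          · exact h2
          · exact absurd h1 (not_lt.mpr ((hCS (t+1)).1 i k))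
        have hle : ((n:ℝ))⁻¹ ^ (t + 1 + 1 - s) ≤ A (t+1) i k * matProd A t s k j := by
          have e1 : t + 1 + 1 - s = (t + 1 - s) + 1 := by omega
          rw [e1, pow_succ, mul_comm]
          apply mul_le_mul (od_entry_lb hOD _ hA) (ih k j hM)
            (by positivity) (le_of_lt hA)
        calc ((n:ℝ))⁻¹ ^ (t + 1 + 1 - s) ≤ A (t+1) i k * matProd A t s k j := hle
          _ ≤ ∑ k, A (t+1) i k * matProd A t s k j :=
              Finset.single_le_sum hterm (Finset.mem_univ k)
      · rw [matProd_eq_one A (by omega)] at h ⊢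
        rw [Nat.sub_eq_zero_of_le (by omega), pow_zero]
        rw [Matrix.one_apply] at h ⊢
        by_cases hij : i = j
        · rw [if_pos hij]
        · rw [if_neg hij] at h; exact absurd h (lt_irrefl 0)

end Lemmas2
section Lemmas3

variable {n : ℕ} {A : ℕ → Matrix (Fin n) (Fin n) ℝ}

lemma flowSum_nonneg (hCS : ∀ t, ColStochastic (A t)) (t : ℕ) (S : Finset (Fin n)) :
    0 ≤ flowSum (A t) S :=
  Finset.sum_nonneg fun i _ => Finset.sum_nonneg fun j _ => (hCS t).1 i j

lemma exists_cut_time (hCS : ∀ t, ColStochastic (A t)) (hflow : DirectedInfiniteFlow A)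
    (k : ℕ) : ∃ t', k < t' ∧ ∀ S : Finset (Fin n), NontrivialSubset S →
      0 < ∑ t ∈ Finset.Ico k t', flowSum (A t) S := by
  have key : ∀ S : Finset (Fin n), NontrivialSubset S →
      ∃ T, k < T ∧ 0 < ∑ t ∈ Finset.Ico k T, flowSum (A t) S := by
    intro S hS
    obtain ⟨T, hT⟩ := ((hflow S hS).eventually_gt_atTop
      (∑ t ∈ Finset.range k, flowSum (A t) S)).exists
    have hkT : k ≤ T := by
      by_contra hc
      push_neg at hc
      have : ∑ t ∈ Finset.range T, flowSum (A t) S ≤ ∑ t ∈ Finset.range k, flowSum (A t) S :=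
        Finset.sum_le_sum_of_subset_of_nonneg
          (Finset.range_subset_range.mpr (le_of_lt hc))
          (fun t _ _ => flowSum_nonneg hCS t S)
      linarith
    have hsplit : ∑ t ∈ Finset.range T, flowSum (A t) S
        = ∑ t ∈ Finset.range k, flowSum (A t) S + ∑ t ∈ Finset.Ico k T, flowSum (A t) S := by
      rw [Finset.range_eq_Ico, Finset.range_eq_Ico, Finset.sum_Ico_consecutive _ (Nat.zero_le k) hkT]
    have hpos : 0 < ∑ t ∈ Finset.Ico k T, flowSum (A t) S := by linarith [hT, hsplit.symm ▸ hT]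
    refine ⟨max T (k+1), by omega, ?_⟩
    calc (0:ℝ) < ∑ t ∈ Finset.Ico k T, flowSum (A t) S := hpos
      _ ≤ ∑ t ∈ Finset.Ico k (max T (k+1)), flowSum (A t) S :=
        Finset.sum_le_sum_of_subset_of_nonneg
          (Finset.Ico_subset_Ico le_rfl (le_max_left _ _))
          (fun t _ _ => flowSum_nonneg hCS t S)
  classical
  set f : Finset (Fin n) → ℕ := fun S =>
    if h : NontrivialSubset S then Classical.choose (key S h) else 0 with hf
  refine ⟨(Finset.univ.sup f) + k + 1, by omega, ?_⟩
  intro S hS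
  have hspec := Classical.choose_spec (key S hS)
  have hfS : f S = Classical.choose (key S hS) := by rw [hf]; simp [hS]
  have hle : f S ≤ Finset.univ.sup f + k + 1 :=
    le_trans (Finset.le_sup (Finset.mem_univ S)) (by omega)
  calc (0:ℝ) < ∑ t ∈ Finset.Ico k (f S), flowSum (A t) S := by rw [hfS]; exact hspec.2
    _ ≤ ∑ t ∈ Finset.Ico k (Finset.univ.sup f + k + 1), flowSum (A t) S :=
      Finset.sum_le_sum_of_subset_of_nonneg
        (Finset.Ico_subset_Ico le_rfl hle)
        (fun t _ _ => flowSum_nonneg hCS t S)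

lemma kSeq_spec (hCS : ∀ t, ColStochastic (A t)) (hflow : DirectedInfiniteFlow A) (q : ℕ) :
    kSeq A q < kSeq A (q + 1) ∧ ∀ S : Finset (Fin n), NontrivialSubset S →
      0 < ∑ t ∈ Finset.Ico (kSeq A q) (kSeq A (q + 1)), flowSum (A t) S := by
  have hne : {t' : ℕ | kSeq A q < t' ∧ ∀ S : Finset (Fin n), NontrivialSubset S →
      0 < ∑ t ∈ Finset.Ico (kSeq A q) t', flowSum (A t) S}.Nonempty := by
    obtain ⟨t', h1, h2⟩ := exists_cut_time hCS hflow (kSeq A q)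
    exact ⟨t', h1, h2⟩
  have := Nat.sInf_mem hne
  rw [show kSeq A (q+1) = sInf {t' : ℕ | kSeq A q < t' ∧ ∀ S : Finset (Fin n),
    NontrivialSubset S → 0 < ∑ t ∈ Finset.Ico (kSeq A q) t', flowSum (A t) S} from rfl]
  exact this

lemma kSeq_strictMono (hCS : ∀ t, ColStochastic (A t)) (hflow : DirectedInfiniteFlow A) :
    StrictMono (kSeq A) :=
  strictMono_nat_of_lt_succ fun q => (kSeq_spec hCS hflow q).1

lemma kSeq_le_self (hCS : ∀ t, ColStochastic (A t)) (hflow : DirectedInfiniteFlow A) (q : ℕ) :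
    q ≤ kSeq A q :=
  (kSeq_strictMono hCS hflow).le_apply

end Lemmas3
section Lemmas4

variable {n : ℕ} {A : ℕ → Matrix (Fin n) (Fin n) ℝ}

lemma support_step (hCS : ∀ t, ColStochastic (A t)) {m t : ℕ} (hm : 1 ≤ m) (ht : m ≤ t)
    {i k j : Fin n} (hM : 0 < matProd A (t - 1) m k j) (hA : 0 < A t i k) :
    0 < matProd A t m i j := by
  have ht1 : t - 1 + 1 = t := by omega
  have hstep : matProd A t m = A t * matProd A (t - 1) m := by
    have h2 := matProd_succ A (show m ≤ (t - 1) + 1 by omega)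
    rw [ht1] at h2
    exact h2
  rw [hstep, Matrix.mul_apply]
  have : (0:ℝ) < A t i k * matProd A (t-1) m k j := mul_pos hA hM
  calc (0:ℝ) < A t i k * matProd A (t-1) m k j := this
    _ ≤ ∑ l, A t i l * matProd A (t-1) m l j :=
      Finset.single_le_sum (fun l _ => mul_nonneg ((hCS t).1 i l)
        ((colStochastic_matProd A hCS _ m).1 l j)) (Finset.mem_univ k)

lemma support_mono (hCS : ∀ t, ColStochastic (A t)) (hOD : ∀ t, OutDegreeForm (A t))
    {m : ℕ} (hm : 1 ≤ m) {t t' : ℕ} (ht : m ≤ t) (htt : t ≤ t') {i j : Fin n}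
    (h : 0 < matProd A (t - 1) m i j) : 0 < matProd A (t' - 1) m i j := by
  induction t', htt using Nat.le_induction with
  | base => exact h
  | succ t' htt ih =>
      have h1 : t' + 1 - 1 = t' := by omega
      rw [h1]
      exact support_step hCS hm (by omega) ih (od_diag_pos hOD t' i)

lemma interval_growth (hCS : ∀ t, ColStochastic (A t)) (hOD : ∀ t, OutDegreeForm (A t))
    (hflow : DirectedInfiniteFlow A) {m : ℕ} (hm : 1 ≤ m) (j : Fin n) (r : ℕ)
    (hmr : m ≤ kSeq A r) :
    (∀ i, 0 < matProd A (kSeq A (r+1) - 1) m i j) ∨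
    ((Finset.univ.filter fun i => 0 < matProd A (kSeq A r - 1) m i j) ⊂
     (Finset.univ.filter fun i => 0 < matProd A (kSeq A (r+1) - 1) m i j)) := by
  classical
  set a := kSeq A r with ha
  set b := kSeq A (r+1) with hb
  have hab : a < b := (kSeq_spec hCS hflow r).1
  set Ra := Finset.univ.filter fun i => 0 < matProd A (a - 1) m i j with hRa
  set Rb := Finset.univ.filter fun i => 0 < matProd A (b - 1) m i j with hRb
  have hsub : Ra ⊆ Rb := by
    intro i hi
    rw [hRa, Finset.mem_filter] at hi
    rw [hRb, Finset.mem_filter]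
    exact ⟨Finset.mem_univ i, support_mono hCS hOD hm hmr (by omega) hi.2⟩
  by_cases huniv : Rb = Finset.univ
  · left
    intro i
    have : i ∈ Rb := huniv ▸ Finset.mem_univ i
    rw [hRb, Finset.mem_filter] at this
    exact this.2
  right
  rw [Finset.ssubset_iff_subset_ne]
  refine ⟨hsub, ?_⟩
  intro heq
  -- R is constant on [a, b]
  have hconst : ∀ t, a ≤ t → t ≤ b →
      (Finset.univ.filter fun i => 0 < matProd A (t - 1) m i j) = Ra := by
    intro t h1 h2
    apply Finset.Subset.antisymm
    · rw [heq]
      intro i hi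
      rw [Finset.mem_filter] at hi
      rw [hRb, Finset.mem_filter]
      exact ⟨Finset.mem_univ i, support_mono hCS hOD hm (le_trans hmr h1) h2 hi.2⟩
    · intro i hi
      rw [hRa, Finset.mem_filter] at hi
      rw [Finset.mem_filter]
      exact ⟨Finset.mem_univ i, support_mono hCS hOD hm hmr h1 hi.2⟩
  -- Ra is nonempty (contains j) and not univ
  have hjRa : j ∈ Ra := by
    rw [hRa, Finset.mem_filter]
    refine ⟨Finset.mem_univ j, ?_⟩
    by_cases hma : m = a
    · subst hma
      rw [matProd_eq_one A (by omega), Matrix.one_apply_eq]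
      norm_num
    · have : m < a := lt_of_le_of_ne hmr hma
      have base : 0 < matProd A (m - 1) m j j := by
        rw [matProd_eq_one A (by omega), Matrix.one_apply_eq]; norm_num
      exact support_mono hCS hOD hm le_rfl (by omega) base
  have hS : NontrivialSubset Raᶜ := by
    constructor
    · rw [← Finset.card_pos, Finset.card_compl, Fintype.card_fin, heq]
      have h2 : Rb.card < n := by
        have h3 := Finset.card_lt_card (Finset.ssubset_univ_iff.mpr huniv)
        simpa [Finset.card_univ] using h3
      omega
    · intro hc
      have : j ∈ Raᶜ := hc ▸ Finset.mem_univ j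
      rw [Finset.mem_compl] at this
      exact this hjRa
  -- positive flow across Raᶜ during [a, b)
  have hpos := (kSeq_spec hCS hflow r).2 Raᶜ hS
  obtain ⟨t, htmem, htpos⟩ : ∃ t ∈ Finset.Ico a b, 0 < flowSum (A t) Raᶜ := by
    by_contra hc
    push_neg at hc
    have : ∑ t ∈ Finset.Ico a b, flowSum (A t) Raᶜ ≤ 0 :=
      Finset.sum_nonpos fun t ht => hc t ht
    rw [← ha, ← hb] at hpos
    linarith
  rw [Finset.mem_Ico] at htmem
  obtain ⟨i, hiS, k, hkS, hik⟩ : ∃ i ∈ Raᶜ, ∃ k ∈ Raᶜᶜ, 0 < A t i k := by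
    by_contra hc
    push_neg at hc
    have : flowSum (A t) Raᶜ ≤ 0 := by
      apply Finset.sum_nonpos
      intro i hi
      apply Finset.sum_nonpos
      intro k hk
      exact hc i hi k hk
    linarith
  rw [compl_compl] at hkS
  -- k ∈ R t (R constant), so i ∈ R (t+1) ⊆ Rb = Ra, contradiction
  have hkRt : 0 < matProd A (t - 1) m k j := by
    have := hconst t htmem.1 (le_of_lt htmem.2)
    have hk : k ∈ Finset.univ.filter fun i => 0 < matProd A (t - 1) m i j := by
      rw [this]; exact hkS
    rw [Finset.mem_filter] at hk
    exact hk.2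
  have hiRt1 : 0 < matProd A t m i j :=
    support_step hCS hm (le_trans hmr htmem.1) hkRt hik
  have hiRb : i ∈ Ra := by
    have h2 : 0 < matProd A (t + 1 - 1) m i j := by
      rw [show t + 1 - 1 = t from rfl]; exact hiRt1
    have := hconst (t+1) (by omega) (by omega)
    have hmem : i ∈ Finset.univ.filter fun i => 0 < matProd A (t + 1 - 1) m i j :=
      Finset.mem_filter.mpr ⟨Finset.mem_univ i, h2⟩
    rw [this] at hmem
    exact hmem
  rw [Finset.mem_compl] at hiS
  exact hiS hiRb

lemma block_positive (hn : 2 ≤ n) (hCS : ∀ t, ColStochastic (A t))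
    (hOD : ∀ t, OutDegreeForm (A t)) (hflow : DirectedInfiniteFlow A)
    (r0 : ℕ) (hr0 : 1 ≤ kSeq A r0) :
    ∀ i j, 0 < matProd A (kSeq A (r0 + n) - 1) (kSeq A r0) i j := by
  classical
  intro i j
  set m := kSeq A r0 with hm
  have key : ∀ p, p ≤ n →
      (∀ i, 0 < matProd A (kSeq A (r0 + p) - 1) m i j) ∨
      p + 1 ≤ (Finset.univ.filter fun i => 0 < matProd A (kSeq A (r0 + p) - 1) m i j).card := by
    intro p
    induction p with
    | zero =>
        intro _
        right
        have hj : j ∈ Finset.univ.filter fun i => 0 < matProd A (kSeq A (r0 + 0) - 1) m i j := by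
          rw [Finset.mem_filter]
          refine ⟨Finset.mem_univ j, ?_⟩
          rw [show r0 + 0 = r0 from rfl, ← hm, matProd_eq_one A (by omega), Matrix.one_apply_eq]
          norm_num
        calc 0 + 1 = 1 := rfl
          _ ≤ _ := Finset.card_pos.mpr ⟨j, hj⟩
    | succ p ih =>
        intro hp
        have hmr : m ≤ kSeq A (r0 + p) :=
          (kSeq_strictMono hCS hflow).monotone (by omega)
        have hlt : kSeq A (r0 + p) ≤ kSeq A (r0 + (p + 1)) :=
          (kSeq_strictMono hCS hflow).monotone (by omega)
        rcases ih (by omega) with huniv | hcard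
        · left
          intro i
          exact support_mono hCS hOD hr0 hmr hlt (huniv i)
        · rcases interval_growth hCS hOD hflow hr0 j (r0 + p) hmr with h1 | h2
          · left
            rw [show r0 + (p + 1) = (r0 + p) + 1 from rfl]
            exact h1
          · right
            have h3 := Finset.card_lt_card h2
            rw [show r0 + (p + 1) = (r0 + p) + 1 from rfl]
            omega
  rcases key n le_rfl with h | h
  · exact h i
  · exfalso
    have h4 : (Finset.univ.filter fun i =>
        0 < matProd A (kSeq A (r0 + n) - 1) m i j).card ≤ n := by
      have := Finset.card_filter_le (Finset.univ : Finset (Fin n))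
        (fun i => 0 < matProd A (kSeq A (r0 + n) - 1) m i j)
      simpa [Finset.card_univ] using this
    omega

end Lemmas4
section Lemmas5

variable {n : ℕ}

lemma sum_mulVec_colStoch {M : Matrix (Fin n) (Fin n) ℝ} (hM : ColStochastic M)
    (v : Fin n → ℝ) : ∑ i, M.mulVec v i = ∑ j, v j := by
  simp only [Matrix.mulVec, dotProduct]
  rw [Finset.sum_comm]
  simp only [← Finset.sum_mul, hM.2, one_mul]

lemma weak_contraction {M : Matrix (Fin n) (Fin n) ℝ} (hM : ColStochastic M)
    (d : Fin n → ℝ) : ∑ i, |M.mulVec d i| ≤ ∑ j, |d j| := by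
  calc ∑ i, |M.mulVec d i| ≤ ∑ i, ∑ j, M i j * |d j| := by
        apply Finset.sum_le_sum
        intro i _
        simp only [Matrix.mulVec, dotProduct]
        calc |∑ j, M i j * d j| ≤ ∑ j, |M i j * d j| := Finset.abs_sum_le_sum_abs _ _
          _ = ∑ j, M i j * |d j| := by
              apply Finset.sum_congr rfl
              intro j _
              rw [abs_mul, abs_of_nonneg (hM.1 i j)]
    _ = ∑ j, |d j| := by
        rw [Finset.sum_comm]
        simp only [← Finset.sum_mul, hM.2, one_mul]

lemma strong_contraction (hn : 1 ≤ n) {M : Matrix (Fin n) (Fin n) ℝ}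
    (hM : ColStochastic M) {ε : ℝ} (hε : 0 ≤ ε) (hmin : ∀ i j, ε ≤ M i j)
    (d : Fin n → ℝ) (hd : ∑ k, d k = 0) :
    ∑ i, |M.mulVec d i| ≤ (1 - ε) * ∑ k, |d k| := by
  classical
  set dp : Fin n → ℝ := fun k => max (d k) 0 with hdp
  set dm : Fin n → ℝ := fun k => max (-d k) 0 with hdm
  have hdpn : ∀ k, 0 ≤ dp k := fun k => le_max_right _ _
  have hdmn : ∀ k, 0 ≤ dm k := fun k => le_max_right _ _
  have hsplit : ∀ k, d k = dp k - dm k := by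
    intro k
    rcases le_total 0 (d k) with h | h
    · simp [hdp, hdm, max_eq_left h, max_eq_right (neg_nonpos.mpr h)]
    · simp [hdp, hdm, max_eq_right h, max_eq_left (neg_nonneg.mpr h)]
  have habs : ∀ k, |d k| = dp k + dm k := by
    intro k
    rcases le_total 0 (d k) with h | h
    · rw [abs_of_nonneg h]
      simp [hdp, hdm, max_eq_left h, max_eq_right (neg_nonpos.mpr h)]
    · rw [abs_of_nonpos h]
      simp [hdp, hdm, max_eq_right h, max_eq_left (neg_nonneg.mpr h)]
  set σ : ℝ := ∑ k, dp k with hσ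
  have hσn : 0 ≤ σ := Finset.sum_nonneg fun k _ => hdpn k
  have hdm_sum : ∑ k, dm k = σ := by
    have : ∑ k, (dp k - dm k) = 0 := by
      rw [← hd]
      exact Finset.sum_congr rfl fun k _ => (hsplit k).symm
    rw [Finset.sum_sub_distrib] at this
    linarith
  have habs_sum : ∑ k, |d k| = 2 * σ := by
    calc ∑ k, |d k| = ∑ k, (dp k + dm k) := Finset.sum_congr rfl fun k _ => habs k
      _ = σ + σ := by rw [Finset.sum_add_distrib, hdm_sum]
      _ = 2 * σ := by ring
  have hmul : ∀ i, M.mulVec d i = (∑ j, M i j * dp j) - (∑ j, M i j * dm j) := by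
    intro i
    simp only [Matrix.mulVec, dotProduct]
    rw [← Finset.sum_sub_distrib]
    apply Finset.sum_congr rfl
    intro j _
    rw [hsplit j]
    ring
  have hxp : ∀ i, ε * σ ≤ ∑ j, M i j * dp j := by
    intro i
    calc ε * σ = ∑ j, ε * dp j := by rw [hσ, Finset.mul_sum]
      _ ≤ ∑ j, M i j * dp j :=
        Finset.sum_le_sum fun j _ => mul_le_mul_of_nonneg_right (hmin i j) (hdpn j)
  have hxm : ∀ i, ε * σ ≤ ∑ j, M i j * dm j := by
    intro i
    calc ε * σ = ∑ j, ε * dm j := by rw [← hdm_sum, Finset.mul_sum]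
      _ ≤ ∑ j, M i j * dm j :=
        Finset.sum_le_sum fun j _ => mul_le_mul_of_nonneg_right (hmin i j) (hdmn j)
  have hbound : ∀ i, |M.mulVec d i| ≤
      (∑ j, M i j * dp j) + (∑ j, M i j * dm j) - 2 * (ε * σ) := by
    intro i
    rw [hmul i]
    rw [abs_le]
    constructor
    · linarith [hxp i, hxm i]
    · linarith [hxp i, hxm i]
  have hsump : ∑ i, ∑ j, M i j * dp j = σ := by
    rw [Finset.sum_comm]
    simp only [← Finset.sum_mul, hM.2, one_mul, hσ]
  have hsumm : ∑ i, ∑ j, M i j * dm j = σ := by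
    rw [Finset.sum_comm]
    simp only [← Finset.sum_mul, hM.2, one_mul, hdm_sum]
  have htotal : ∑ i, |M.mulVec d i| ≤ 2 * σ - (n : ℝ) * (2 * (ε * σ)) := by
    calc ∑ i, |M.mulVec d i|
        ≤ ∑ i, ((∑ j, M i j * dp j) + (∑ j, M i j * dm j) - 2 * (ε * σ)) :=
          Finset.sum_le_sum fun i _ => hbound i
      _ = σ + σ - (n : ℝ) * (2 * (ε * σ)) := by
          rw [Finset.sum_sub_distrib, Finset.sum_add_distrib, hsump, hsumm,
            Finset.sum_const, Finset.card_univ, Fintype.card_fin, nsmul_eq_mul]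
      _ = 2 * σ - (n : ℝ) * (2 * (ε * σ)) := by ring
  rw [habs_sum]
  have hn' : (1 : ℝ) ≤ (n : ℝ) := by exact_mod_cast hn
  nlinarith [mul_nonneg hε hσn, htotal]

end Lemmas5
section Lemmas6

lemma prod_tendsto_zero {x : ℕ → ℝ} (hx0 : ∀ q, 0 ≤ x q) (hx1 : ∀ q, x q ≤ 1)
    (hs : Filter.Tendsto (fun Q => ∑ q ∈ Finset.Icc 1 Q, x q) Filter.atTop Filter.atTop)
    (Q₀ : ℕ) (hQ₀ : 1 ≤ Q₀) :
    Filter.Tendsto (fun Q => ∏ q ∈ Finset.Icc Q₀ Q, (1 - x q)) Filter.atTop (nhds 0) := by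
  classical
  set C : ℝ := ∑ q ∈ Finset.Icc 1 (Q₀ - 1), x q with hC
  have htail : Filter.Tendsto (fun Q => ∑ q ∈ Finset.Icc Q₀ Q, x q) Filter.atTop
      Filter.atTop := by
    apply Filter.tendsto_atTop_mono' _ _ (Filter.tendsto_atTop_add_const_right _ (-C) hs)
    filter_upwards [Filter.eventually_ge_atTop Q₀] with Q hQ
    have hsub : Finset.Icc 1 (Q₀ - 1) ⊆ Finset.Icc 1 Q := by
      apply Finset.Icc_subset_Icc le_rfl
      omega
    have hsdiff : Finset.Icc 1 Q \ Finset.Icc 1 (Q₀ - 1) = Finset.Icc Q₀ Q := by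
      ext q
      simp only [Finset.mem_sdiff, Finset.mem_Icc]
      omega
    have := Finset.sum_sdiff_eq_sub (f := x) hsub
    rw [hsdiff] at this
    rw [this, hC]
    ring_nf
    exact le_rfl
  have hexp : Filter.Tendsto (fun Q => Real.exp (-(∑ q ∈ Finset.Icc Q₀ Q, x q)))
      Filter.atTop (nhds 0) :=
    Real.tendsto_exp_atBot.comp (Filter.tendsto_neg_atTop_atBot.comp htail)
  apply tendsto_of_tendsto_of_tendsto_of_le_of_le' tendsto_const_nhds hexp
  · filter_upwards with Q
    exact Finset.prod_nonneg fun q _ => by linarith [hx1 q]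
  · filter_upwards with Q
    calc ∏ q ∈ Finset.Icc Q₀ Q, (1 - x q)
        ≤ ∏ q ∈ Finset.Icc Q₀ Q, Real.exp (-(x q)) := by
          apply Finset.prod_le_prod
          · intro q _; linarith [hx1 q]
          · intro q _
            have := Real.add_one_le_exp (-(x q))
            linarith
      _ = Real.exp (-(∑ q ∈ Finset.Icc Q₀ Q, x q)) := by
          rw [← Real.exp_sum, Finset.sum_neg_distrib]

end Lemmas6

/-- Under the hypotheses of Statement 3, if `∑_q 1/n^{ℓ_q} = ∞`,
then `|[A(t:s)]_{ij} - φ_i(t)| → 0` as `t → ∞`. -/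
theorem column_stochastic_limit {n : ℕ} (hn : 2 ≤ n)
    (A : ℕ → Matrix (Fin n) (Fin n) ℝ)
    (hCS : ∀ t, ColStochastic (A t))
    (hOD : ∀ t, OutDegreeForm (A t))
    (hAper : StronglyAperiodic A)
    (hflow : DirectedInfiniteFlow A)
    (hsum : Filter.Tendsto
      (fun Q => ∑ q ∈ Finset.Icc 1 Q, 1 / (n : ℝ) ^ (ellSeq A q))
      Filter.atTop Filter.atTop) :
    ∀ s : ℕ, ∃ φ : ℕ → Fin n → ℝ, ∀ i j,
      Filter.Tendsto (fun t => |matProd A t s i j - φ t i|)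
        Filter.atTop (nhds 0) := by
  intro s
  classical
  have hn1 : 1 ≤ n := by omega
  have hnR : (1 : ℝ) ≤ (n : ℝ) := by exact_mod_cast hn1
  set j₀ : Fin n := ⟨0, by omega⟩ with hj₀
  refine ⟨fun t i => matProd A t s i j₀, ?_⟩
  intro i j
  -- the difference vector and its evolution
  set v : Fin n → ℝ :=
    fun k => (if k = j then (1:ℝ) else 0) - (if k = j₀ then (1:ℝ) else 0) with hv
  set g : ℕ → Fin n → ℝ := fun t => (matProd A t s).mulVec v with hg
  have hgv : ∀ t (i' : Fin n), matProd A t s i' j - matProd A t s i' j₀ = g t i' := by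
    intro t i'
    rw [hg]
    simp only [Matrix.mulVec, dotProduct, hv, mul_sub, mul_ite, mul_one, mul_zero,
      Finset.sum_sub_distrib, Finset.sum_ite_eq', Finset.mem_univ, if_true]
  have hv0 : ∑ k, v k = 0 := by
    simp only [hv, Finset.sum_sub_distrib, Finset.sum_ite_eq', Finset.mem_univ, if_true]
    ring
  have hsumg : ∀ t, ∑ k, g t k = 0 := by
    intro t
    rw [hg]
    simp only
    rw [sum_mulVec_colStoch (colStochastic_matProd A hCS t s), hv0]
  set N : ℕ → ℝ := fun t => ∑ k, |g t k| with hN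
  have hN0 : ∀ t, 0 ≤ N t := fun t => Finset.sum_nonneg fun k _ => abs_nonneg _
  have hgstep : ∀ t, s ≤ t + 1 → g (t + 1) = (A (t + 1)).mulVec (g t) := by
    intro t ht
    rw [hg]
    simp only
    rw [matProd_succ A ht, ← Matrix.mulVec_mulVec]
  have hNmono : ∀ t₁ t₂, s ≤ t₁ + 1 → t₁ ≤ t₂ → N t₂ ≤ N t₁ := by
    intro t₁ t₂ hs1 h12
    induction t₂, h12 using Nat.le_induction with
    | base => exact le_rfl
    | succ t₂ h12 ih =>
        calc N (t₂ + 1) ≤ N t₂ := by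
              rw [hN]
              simp only
              rw [hgstep t₂ (by omega)]
              exact weak_contraction (hCS (t₂ + 1)) (g t₂)
          _ ≤ N t₁ := ih
  -- the per-block contraction
  set x : ℕ → ℝ := fun q => 1 / (n : ℝ) ^ (ellSeq A q) with hx
  have hx0 : ∀ q, 0 ≤ x q := by
    intro q
    rw [hx]
    positivity
  have hx1 : ∀ q, x q ≤ 1 := by
    intro q
    rw [hx]
    rw [div_le_one (by positivity)]
    exact one_le_pow₀ hnR
  set Q₀ : ℕ := s + 2 with hQ₀
  have hstart : ∀ Q, Q₀ ≤ Q → s + 1 ≤ kSeq A ((Q - 1) * n) := by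
    intro Q hQ
    have h1 : s + 1 ≤ (Q - 1) * n := by
      have : (s + 1) * 1 ≤ (Q - 1) * n := Nat.mul_le_mul (by omega) hn1
      omega
    exact le_trans h1 (kSeq_le_self hCS hflow _)
  have hblock : ∀ Q, Q₀ ≤ Q →
      N (kSeq A (Q * n) - 1) ≤ (1 - x Q) * N (kSeq A ((Q - 1) * n) - 1) := by
    intro Q hQ
    set a := kSeq A ((Q - 1) * n) with ha
    set b := kSeq A (Q * n) with hb
    have hsa : s < a := hstart Q hQ
    have hab : a < b := by
      apply kSeq_strictMono hCS hflow
      have : (Q - 1) * n < (Q - 1) * n + n := by omega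
      calc (Q - 1) * n < (Q - 1) * n + n := this
        _ = Q * n := by
            have hQ1 : Q - 1 + 1 = Q := by omega
            calc (Q - 1) * n + n = (Q - 1 + 1) * n := by ring
              _ = Q * n := by rw [hQ1]
    have hsplit : matProd A (b - 1) s = matProd A (b - 1) a * matProd A (a - 1) s :=
      matProd_split A hsa (b - 1) (by omega)
    have hgb : g (b - 1) = (matProd A (b - 1) a).mulVec (g (a - 1)) := by
      rw [hg]
      simp only
      rw [hsplit, ← Matrix.mulVec_mulVec]
    -- the block matrix is fully positive with entries ≥ x Q
    have hpos : ∀ i' j', 0 < matProd A (b - 1) a i' j' := by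
      have h1 : 1 ≤ kSeq A ((Q - 1) * n) := by omega
      have h2 := block_positive hn hCS hOD hflow ((Q - 1) * n) h1
      have h3 : (Q - 1) * n + n = Q * n := by
        have hQ1 : Q - 1 + 1 = Q := by omega
        calc (Q - 1) * n + n = (Q - 1 + 1) * n := by ring
          _ = Q * n := by rw [hQ1]
      rw [h3] at h2
      exact h2
    have hmin : ∀ i' j', x Q ≤ matProd A (b - 1) a i' j' := by
      intro i' j'
      have hlb := matProd_entry_lb hCS hOD a (b - 1) i' j' (hpos i' j')
      have he : b - 1 + 1 - a = ellSeq A Q := by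
        have : ellSeq A Q = kSeq A (Q * n) - kSeq A ((Q - 1) * n) := rfl
        omega
      rw [he] at hlb
      calc x Q = ((n : ℝ))⁻¹ ^ (ellSeq A Q) := by simp [hx, one_div, inv_pow]
        _ ≤ _ := hlb
    have := strong_contraction hn1 (colStochastic_matProd A hCS (b - 1) a)
      (hx0 Q) hmin (g (a - 1)) (hsumg (a - 1))
    rw [hN]
    simp only
    rw [hgb]
    exact this
  -- iterate across blocks
  set B : ℝ := N (kSeq A ((Q₀ - 1) * n) - 1) with hB
  have hind : ∀ Q, Q₀ ≤ Q →
      N (kSeq A (Q * n) - 1) ≤ (∏ q ∈ Finset.Icc Q₀ Q, (1 - x q)) * B := by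
    intro Q hQ
    induction Q, hQ using Nat.le_induction with
    | base =>
        rw [Finset.Icc_self, Finset.prod_singleton]
        exact hblock Q₀ le_rfl
    | succ Q hQ ih =>
        have hb1 := hblock (Q + 1) (by omega)
        have he : Q + 1 - 1 = Q := rfl
        rw [he] at hb1
        have h1x : (0:ℝ) ≤ 1 - x (Q + 1) := by linarith [hx1 (Q + 1)]
        calc N (kSeq A ((Q + 1) * n) - 1) ≤ (1 - x (Q + 1)) * N (kSeq A (Q * n) - 1) := hb1
          _ ≤ (1 - x (Q + 1)) * ((∏ q ∈ Finset.Icc Q₀ Q, (1 - x q)) * B) :=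
              mul_le_mul_of_nonneg_left ih h1x
          _ = (∏ q ∈ Finset.Icc Q₀ (Q + 1), (1 - x q)) * B := by
              rw [Finset.prod_Icc_succ_top (by omega)]
              ring
  -- the product tends to zero
  have hB0 : 0 ≤ B := hN0 _
  have hprod : Filter.Tendsto (fun Q => (∏ q ∈ Finset.Icc Q₀ Q, (1 - x q)) * B)
      Filter.atTop (nhds 0) := by
    have := (prod_tendsto_zero hx0 hx1 hsum Q₀ (by omega)).mul_const B
    rwa [zero_mul] at this
  -- conclude
  have hNlim : Filter.Tendsto N Filter.atTop (nhds 0) := by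
    rw [Metric.tendsto_atTop]
    intro ε hε
    obtain ⟨Q, hQmem⟩ := ((hprod.eventually (eventually_lt_nhds hε)).and
      (Filter.eventually_ge_atTop Q₀)).exists
    obtain ⟨hQε, hQ₀Q⟩ := hQmem
    refine ⟨kSeq A (Q * n) - 1, ?_⟩
    intro t ht
    have hs1 : s ≤ (kSeq A (Q * n) - 1) + 1 := by
      have := hstart Q hQ₀Q
      have h2 : kSeq A ((Q - 1) * n) ≤ kSeq A (Q * n) :=
        (kSeq_strictMono hCS hflow).monotone (Nat.mul_le_mul_right n (by omega))
      omega
    have h3 : N t ≤ N (kSeq A (Q * n) - 1) := hNmono _ t hs1 ht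
    have h4 : N (kSeq A (Q * n) - 1) ≤ (∏ q ∈ Finset.Icc Q₀ Q, (1 - x q)) * B :=
      hind Q hQ₀Q
    rw [Real.dist_eq, sub_zero, abs_of_nonneg (hN0 t)]
    linarith
  have hfun : (fun t => |matProd A t s i j - matProd A t s i j₀|) = fun t => |g t i| := by
    funext t
    rw [hgv t i]
  simp only [hfun] -- may not directly apply; goal uses φ
  apply tendsto_of_tendsto_of_tendsto_of_le_of_le' tendsto_const_nhds hNlim
  · filter_upwards with t
    exact abs_nonneg _
  · filter_upwards with t
    calc |g t i| ≤ ∑ k, |g t k| :=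
          Finset.single_le_sum (fun k _ => abs_nonneg (g t k)) (Finset.mem_univ i)
      _ = N t := rfl
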